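/- arXiv:math/0606029 — 2 statements merged into one kernel-verified Lean document; each statement's English description precedes it below -/
import Mathlib

section
/- Suppose A: R^m → R^m is a linear map admitting an invariant splitting R^m = E^s ⊕ E^c with ‖A x‖ ≤ λ‖x‖ for x ∈ E^s and ‖A x‖ ≥ σ‖x‖ for x ∈ E^c, where 0<λ<σ, using the adapted max-norm ‖(x_s,x_c)‖ = max(‖x_s‖,‖x_c‖). Let ε>0 satisfy λ+ε<σ−ε and let θ = (λ+ε)/(σ−ε). If G(x) = A x + ρ(x) with ‖ρ(x)‖ ≤ ε‖x‖ for all x in a ball B(0,r̃), then the central cone V_c = {(x_s,x_c) : ‖x_s‖ ≤ θ‖x_c‖} is forward invariant on B(0,r̃): if x ∈ B(0,r̃) ∩ V_c and G(x) ∈ B(0,r̃), then G(x) ∈ V_c; moreover ‖(G(x))_c‖ ≥ (σ−ε)‖x_c‖. -/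
open Metric Set

set_option maxHeartbeats 1000000 in
/-- Cone invariance lemma: with an adapted max-norm for the invariant splitting
`E = Es ⊕ Ec`, contraction rate `λ` on `Es`, expansion rate `σ` on `Ec`,
`λ+ε < σ-ε`, and `G = A + ρ` with `‖ρ(x)‖ ≤ ε‖x‖` on the ball, the central cone
of width `θ = (λ+ε)/(σ-ε)` is forward invariant and the central component grows
by a factor at least `σ-ε`. -/
theorem stmt1 {E : Type*} [NormedAddCommGroup E] [NormedSpace ℝ E]
    (A : E →L[ℝ] E) (Es Ec : Submodule ℝ E) (hcompl : IsCompl Es Ec)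
    (hAs : ∀ x ∈ Es, A x ∈ Es) (hAc : ∀ x ∈ Ec, A x ∈ Ec)
    (lam sig eps r : ℝ) (hlam0 : 0 < lam) (hls : lam < sig) (heps : 0 < eps)
    (hgap : lam + eps < sig - eps) (hr : 0 < r)
    (hnorm : ∀ x : E,
      ‖x‖ = max ‖(Es.linearProjOfIsCompl Ec hcompl x : E)‖
              ‖(Ec.linearProjOfIsCompl Es hcompl.symm x : E)‖)
    (hAlam : ∀ x ∈ Es, ‖A x‖ ≤ lam * ‖x‖)
    (hAsig : ∀ x ∈ Ec, sig * ‖x‖ ≤ ‖A x‖)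
    (G ρ : E → E) (hG : ∀ x, G x = A x + ρ x)
    (hρ : ∀ x ∈ ball (0 : E) r, ‖ρ x‖ ≤ eps * ‖x‖)
    (x : E) (hx : x ∈ ball (0 : E) r)
    (hxcone : ‖(Es.linearProjOfIsCompl Ec hcompl x : E)‖ ≤
      ((lam + eps) / (sig - eps)) * ‖(Ec.linearProjOfIsCompl Es hcompl.symm x : E)‖)
    (hGx : G x ∈ ball (0 : E) r) :
    ‖(Es.linearProjOfIsCompl Ec hcompl (G x) : E)‖ ≤
      ((lam + eps) / (sig - eps)) * ‖(Ec.linearProjOfIsCompl Es hcompl.symm (G x) : E)‖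
    ∧ (sig - eps) * ‖(Ec.linearProjOfIsCompl Es hcompl.symm x : E)‖ ≤
        ‖(Ec.linearProjOfIsCompl Es hcompl.symm (G x) : E)‖ := by
  set P := Es.linearProjOfIsCompl Ec hcompl with hP
  set Q := Ec.linearProjOfIsCompl Es hcompl.symm with hQ
  set s : E := (P x : E) with hs
  set c : E := (Q x : E) with hc
  have hse : s + c = x := Submodule.projection_add_projection_eq_self hcompl x
  have hsEs : s ∈ Es := (P x).2
  have hcEc : c ∈ Ec := (Q x).2
  have hAsE : A s ∈ Es := hAs s hsEs
  have hAcE : A c ∈ Ec := hAc c hcEc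
  have hθpos : (0:ℝ) < sig - eps := by linarith
  have hθ1 : (lam + eps) / (sig - eps) ≤ 1 := by
    rw [div_le_one hθpos]; linarith
  have hθ0 : (0:ℝ) ≤ (lam + eps) / (sig - eps) := by positivity
  -- ‖x‖ = ‖c‖
  have hsc : ‖s‖ ≤ ‖c‖ := le_trans hxcone (by nlinarith [norm_nonneg c])
  have hxc : ‖x‖ = ‖c‖ := by rw [hnorm x]; exact max_eq_right hsc
  -- decompose G x
  have hGdec : G x = A s + A c + ρ x := by
    rw [hG x, ← hse, map_add]
  have hPG : (P (G x) : E) = A s + (P (ρ x) : E) := by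
    rw [hGdec, map_add, map_add]
    have h1 : P (A s) = ⟨A s, hAsE⟩ :=
      Submodule.linearProjOfIsCompl_apply_left hcompl ⟨A s, hAsE⟩
    have h2 : P (A c) = 0 :=
      Submodule.projectionOnto_apply_of_mem_right hcompl hAcE
    rw [h1, h2]
    simp
  have hQG : (Q (G x) : E) = A c + (Q (ρ x) : E) := by
    rw [hGdec, map_add, map_add]
    have h1 : Q (A c) = ⟨A c, hAcE⟩ :=
      Submodule.linearProjOfIsCompl_apply_left hcompl.symm ⟨A c, hAcE⟩
    have h2 : Q (A s) = 0 :=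
      Submodule.projectionOnto_apply_of_mem_right hcompl.symm hAsE
    rw [h1, h2]
    simp
  have hρx : ‖ρ x‖ ≤ eps * ‖c‖ := by rw [← hxc]; exact hρ x hx
  have hPρ : ‖(P (ρ x) : E)‖ ≤ eps * ‖c‖ := by
    refine le_trans ?_ hρx
    rw [hnorm (ρ x)]; exact le_max_left _ _
  have hQρ : ‖(Q (ρ x) : E)‖ ≤ eps * ‖c‖ := by
    refine le_trans ?_ hρx
    rw [hnorm (ρ x)]; exact le_max_right _ _
  -- second claim
  have hlow : (sig - eps) * ‖c‖ ≤ ‖(Q (G x) : E)‖ := by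
    have hAcn : sig * ‖c‖ ≤ ‖A c‖ := hAsig c hcEc
    have : ‖A c‖ - ‖(Q (ρ x) : E)‖ ≤ ‖(Q (G x) : E)‖ := by
      have h4 : ‖A c‖ ≤ ‖A c + (Q (ρ x) : E)‖ + ‖(Q (ρ x) : E)‖ := by
        calc ‖A c‖ = ‖(A c + (Q (ρ x) : E)) - (Q (ρ x) : E)‖ := by rw [add_sub_cancel_right]
          _ ≤ _ := norm_sub_le _ _
      rw [hQG]; linarith
    linarith
  refine ⟨?_, hlow⟩
  -- first claim
  have hup : ‖(P (G x) : E)‖ ≤ (lam + eps) * ‖c‖ := by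
    have h1 : ‖(P (G x) : E)‖ ≤ ‖A s‖ + ‖(P (ρ x) : E)‖ := by
      rw [hPG]; exact norm_add_le _ _
    have h2 : ‖A s‖ ≤ lam * ‖s‖ := hAlam s hsEs
    have h3 : lam * ‖s‖ ≤ lam * ‖c‖ := mul_le_mul_of_nonneg_left hsc hlam0.le
    linarith
  calc ‖(P (G x) : E)‖ ≤ (lam + eps) * ‖c‖ := hup
    _ = ((lam + eps) / (sig - eps)) * ((sig - eps) * ‖c‖) := by
        rw [← mul_assoc, div_mul_cancel₀ _ hθpos.ne']
    _ ≤ ((lam + eps) / (sig - eps)) * ‖(Q (G x) : E)‖ := by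
        exact mul_le_mul_of_nonneg_left hlow hθ0
end

section
/- With the notation of the cone-invariance lemma: if x ∈ B(0,r̃) ∩ V_c with x_c ≠ 0 and all iterates G^n(x) remain in B(0,r̃), then ‖G^n(x)‖ ≥ (σ−ε)^n ‖x_c‖ for all n ∈ ℕ. In particular, if additionally (σ−ε) > 1 or more generally ‖G^n(x)‖ ≤ C·λ^n for some constant C with λ < σ−ε, then x_c = 0. -/
open Metric Set

/-- Iterated cone expansion: in the setting of the cone-invariance lemma, if `x`
lies in the central cone with nonzero central component and all iterates of `G`
stay in the ball, then `‖Gⁿ x‖ ≥ (σ-ε)ⁿ ‖x_c‖`; consequently if `‖Gⁿ x‖ ≤ C λⁿ`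
for some constant `C`, then `x_c = 0`. -/
theorem stmt2 {E : Type*} [NormedAddCommGroup E] [NormedSpace ℝ E]
    (A : E →L[ℝ] E) (Es Ec : Submodule ℝ E) (hcompl : IsCompl Es Ec)
    (hAs : ∀ x ∈ Es, A x ∈ Es) (hAc : ∀ x ∈ Ec, A x ∈ Ec)
    (lam sig eps r : ℝ) (hlam0 : 0 < lam) (hls : lam < sig) (heps : 0 < eps)
    (hgap : lam + eps < sig - eps) (hr : 0 < r)
    (hnorm : ∀ x : E,
      ‖x‖ = max ‖(Es.linearProjOfIsCompl Ec hcompl x : E)‖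
              ‖(Ec.linearProjOfIsCompl Es hcompl.symm x : E)‖)
    (hAlam : ∀ x ∈ Es, ‖A x‖ ≤ lam * ‖x‖)
    (hAsig : ∀ x ∈ Ec, sig * ‖x‖ ≤ ‖A x‖)
    (G ρ : E → E) (hG : ∀ x, G x = A x + ρ x)
    (hρ : ∀ x ∈ ball (0 : E) r, ‖ρ x‖ ≤ eps * ‖x‖)
    (x : E)
    (hxcone : ‖(Es.linearProjOfIsCompl Ec hcompl x : E)‖ ≤
      ((lam + eps) / (sig - eps)) * ‖(Ec.linearProjOfIsCompl Es hcompl.symm x : E)‖)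
    (hxc : (Ec.linearProjOfIsCompl Es hcompl.symm x : E) ≠ 0)
    (hiter : ∀ n : ℕ, G^[n] x ∈ ball (0 : E) r) :
    (∀ n : ℕ,
      (sig - eps) ^ n * ‖(Ec.linearProjOfIsCompl Es hcompl.symm x : E)‖ ≤ ‖G^[n] x‖)
    ∧ ((∃ C : ℝ, ∀ n : ℕ, ‖G^[n] x‖ ≤ C * lam ^ n) →
        (Ec.linearProjOfIsCompl Es hcompl.symm x : E) = 0) := by
  set πs : E → E := fun y => (Es.linearProjOfIsCompl Ec hcompl y : E) with hπs
  set πc : E → E := fun y => (Ec.linearProjOfIsCompl Es hcompl.symm y : E) with hπc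
  set θ : ℝ := (lam + eps) / (sig - eps) with hθ
  have hse : (0:ℝ) < sig - eps := lt_trans (by positivity) hgap
  have hθ1 : θ < 1 := (div_lt_one hse).2 hgap
  have hθ0 : 0 ≤ θ := div_nonneg (by positivity) hse.le
  -- projections of decompositions
  have hsum : ∀ y : E, πs y + πc y = y := fun y =>
    Submodule.projection_add_projection_eq_self hcompl y
  have hprojc : ∀ u v : E, u ∈ Es → v ∈ Ec → πc (u + v) = v := by
    intro u v hu hv
    have h1 : Ec.linearProjOfIsCompl Es hcompl.symm u = 0 :=
      Submodule.projectionOnto_apply_of_mem_right hcompl.symm hu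
    have h2 : Ec.linearProjOfIsCompl Es hcompl.symm v = ⟨v, hv⟩ :=
      Submodule.linearProjOfIsCompl_apply_left hcompl.symm ⟨v, hv⟩
    simp [hπc, map_add, h1, h2]
  have hprojs : ∀ u v : E, u ∈ Es → v ∈ Ec → πs (u + v) = u := by
    intro u v hu hv
    have h1 : Es.linearProjOfIsCompl Ec hcompl v = 0 :=
      Submodule.projectionOnto_apply_of_mem_right hcompl hv
    have h2 : Es.linearProjOfIsCompl Ec hcompl u = ⟨u, hu⟩ :=
      Submodule.linearProjOfIsCompl_apply_left hcompl ⟨u, hu⟩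
    simp [hπs, map_add, h1, h2]
  have hπs_mem : ∀ y : E, πs y ∈ Es := fun y => SetLike.coe_mem _
  have hπc_mem : ∀ y : E, πc y ∈ Ec := fun y => SetLike.coe_mem _
  -- the key one-step estimate
  have key : ∀ y : E, y ∈ ball (0 : E) r → ‖πs y‖ ≤ θ * ‖πc y‖ →
      (sig - eps) * ‖πc y‖ ≤ ‖πc (G y)‖ ∧ ‖πs (G y)‖ ≤ θ * ‖πc (G y)‖ := by
    intro y hyball hycone
    have hynorm : ‖y‖ = ‖πc y‖ := by
      rw [hnorm y]
      exact max_eq_right (le_trans hycone (by nlinarith [norm_nonneg (πc y)]))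
    have hAy : A y = A (πs y) + A (πc y) := by
      conv_lhs => rw [← hsum y]
      exact map_add A _ _
    have hGdecomp : G y = (A (πs y) + πs (ρ y)) + (A (πc y) + πc (ρ y)) := by
      rw [hG y, hAy]
      conv_lhs => rw [← hsum (ρ y)]
      abel
    have hmem_s : A (πs y) + πs (ρ y) ∈ Es :=
      Es.add_mem (hAs _ (hπs_mem y)) (hπs_mem (ρ y))
    have hmem_c : A (πc y) + πc (ρ y) ∈ Ec :=
      Ec.add_mem (hAc _ (hπc_mem y)) (hπc_mem (ρ y))
    have hGc : πc (G y) = A (πc y) + πc (ρ y) := by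
      rw [hGdecomp]; exact hprojc _ _ hmem_s hmem_c
    have hGs : πs (G y) = A (πs y) + πs (ρ y) := by
      rw [hGdecomp]; exact hprojs _ _ hmem_s hmem_c
    have hρy : ‖ρ y‖ ≤ eps * ‖πc y‖ := by
      have := hρ y hyball; rwa [hynorm] at this
    have hρc : ‖πc (ρ y)‖ ≤ eps * ‖πc y‖ :=
      le_trans (le_trans (le_max_right _ _) (hnorm (ρ y)).ge) hρy
    have hρs : ‖πs (ρ y)‖ ≤ eps * ‖πc y‖ :=
      le_trans (le_trans (le_max_left _ _) (hnorm (ρ y)).ge) hρy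
    have hAc' : sig * ‖πc y‖ ≤ ‖A (πc y)‖ := hAsig _ (hπc_mem y)
    have hAs' : ‖A (πs y)‖ ≤ lam * ‖πs y‖ := hAlam _ (hπs_mem y)
    have hclow : (sig - eps) * ‖πc y‖ ≤ ‖πc (G y)‖ := by
      rw [hGc]
      have h := norm_le_add_norm_add (A (πc y)) (πc (ρ y))
      linarith
    refine ⟨hclow, ?_⟩
    have hsup : ‖πs (G y)‖ ≤ (lam + eps) * ‖πc y‖ := by
      rw [hGs]
      calc ‖A (πs y) + πs (ρ y)‖ ≤ ‖A (πs y)‖ + ‖πs (ρ y)‖ := norm_add_le _ _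
        _ ≤ lam * (θ * ‖πc y‖) + eps * ‖πc y‖ := by
            have : lam * ‖πs y‖ ≤ lam * (θ * ‖πc y‖) :=
              mul_le_mul_of_nonneg_left hycone hlam0.le
            linarith
        _ ≤ (lam + eps) * ‖πc y‖ := by
            have h1 : lam * θ ≤ lam := by nlinarith
            nlinarith [mul_le_mul_of_nonneg_right h1 (norm_nonneg (πc y))]
    calc ‖πs (G y)‖ ≤ (lam + eps) * ‖πc y‖ := hsup
      _ = θ * ((sig - eps) * ‖πc y‖) := by rw [hθ, ← mul_assoc, div_mul_cancel₀ _ hse.ne']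
      _ ≤ θ * ‖πc (G y)‖ := mul_le_mul_of_nonneg_left hclow hθ0
  -- induction
  have main : ∀ n : ℕ, ‖πs (G^[n] x)‖ ≤ θ * ‖πc (G^[n] x)‖ ∧
      (sig - eps) ^ n * ‖πc x‖ ≤ ‖πc (G^[n] x)‖ := by
    intro n
    induction n with
    | zero => exact ⟨hxcone, by simp⟩
    | succ n ih =>
      obtain ⟨ih1, ih2⟩ := ih
      obtain ⟨k1, k2⟩ := key (G^[n] x) (hiter n) ih1
      rw [Function.iterate_succ_apply']
      refine ⟨k2, ?_⟩
      calc (sig - eps) ^ (n + 1) * ‖πc x‖ = (sig - eps) * ((sig - eps) ^ n * ‖πc x‖) := by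
            ring
        _ ≤ (sig - eps) * ‖πc (G^[n] x)‖ := mul_le_mul_of_nonneg_left ih2 hse.le
        _ ≤ ‖πc (G (G^[n] x))‖ := k1
  have grow : ∀ n : ℕ, (sig - eps) ^ n * ‖πc x‖ ≤ ‖G^[n] x‖ := by
    intro n
    exact le_trans (main n).2 (le_trans (le_max_right _ _) (hnorm (G^[n] x)).ge)
  refine ⟨grow, ?_⟩
  rintro ⟨C, hC⟩
  by_contra hne
  have hpos : 0 < ‖πc x‖ := norm_pos_iff.2 hne
  have hratio : (1:ℝ) < (sig - eps) / lam := (one_lt_div hlam0).2 (by linarith)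
  obtain ⟨n, hn⟩ := pow_unbounded_of_one_lt (C / ‖πc x‖) hratio
  rw [div_pow, div_lt_div_iff₀ hpos (pow_pos hlam0 n)] at hn
  have h1 := grow n
  have h2 := hC n
  nlinarith
end
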